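/- Consider matrices A ∈ ℝ^{d×d}, B ∈ ℝ^{d×p}, K ∈ ℝ^{p×d}, C ∈ ℝ^{q×d}, D ∈ ℝ^{q×p}, vectors b ∈ ℝᵈ, c̄ ∈ ℝ^q, and a nonempty compact set W ⊆ ℝᵈ. Set A_K := A − BK, C_K := C − DK, and define for each k ≥ 0 the tightening vector d_k ∈ ℝ^q componentwise by (d_k)ᵢ = max over w₀,…,w_{k−1} ∈ W of (C_K)ᵢ Σ_{j=0}^{k−1} A_Kʲ w_j. Suppose a nominal trajectory x_{k+1} = A x_k + B u_k + b satisfies the tightened constraints C x_k + D u_k + c̄ + d_k ≤ 0 for k = 0,…,N−1. Then for every disturbance sequence w_k ∈ W, the perturbed trajectory defined by s₀ = x₀, a_k = u_k − K(s_k − x_k), s_{k+1} = A s_k + B a_k + b + w_k satisfies the original safety constraints C s_k + D a_k + c̄ ≤ 0 componentwise for all k = 0,…,N−1. -/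
import Mathlib


open Matrix

/-- Finite-horizon robust constraint satisfaction underlying Proposition 1:
if the nominal trajectory satisfies the tightened constraints
`C x_k + D u_k + c̄ + d_k ≤ 0` with tightening vectors
`(d_k)ᵢ = max over w₀,…,w_{k-1} ∈ W of (C_K)ᵢ ∑_{j<k} A_Kʲ w_j`,
then every perturbed trajectory under the tube policy
`a_k = u_k - K (s_k - x_k)` and disturbances `w_k ∈ W` satisfies the original
safety constraints `C s_k + D a_k + c̄ ≤ 0` for `k = 0,…,N-1`. -/
theorem stmt_9 (dn pn qn : ℕ)
    (A : Matrix (Fin dn) (Fin dn) ℝ) (B : Matrix (Fin dn) (Fin pn) ℝ)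
    (K : Matrix (Fin pn) (Fin dn) ℝ)
    (C : Matrix (Fin qn) (Fin dn) ℝ) (D : Matrix (Fin qn) (Fin pn) ℝ)
    (b : Fin dn → ℝ) (cbar : Fin qn → ℝ)
    (W : Set (Fin dn → ℝ)) (hWne : W.Nonempty) (hWc : IsCompact W)
    (AK : Matrix (Fin dn) (Fin dn) ℝ) (hAK : AK = A - B * K)
    (CK : Matrix (Fin qn) (Fin dn) ℝ) (hCK : CK = C - D * K)
    (dvec : ℕ → Fin qn → ℝ)
    (hd : ∀ k i, IsGreatest
      {y : ℝ | ∃ ws : Fin k → (Fin dn → ℝ), (∀ j, ws j ∈ W) ∧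
          y = CK.mulVec (∑ j : Fin k, (AK ^ (j : ℕ)).mulVec (ws j)) i}
      (dvec k i))
    (N : ℕ) (x : ℕ → (Fin dn → ℝ)) (u : ℕ → (Fin pn → ℝ))
    (hx : ∀ k < N, x (k + 1) = A.mulVec (x k) + B.mulVec (u k) + b)
    (htight : ∀ k < N, ∀ i,
      (C.mulVec (x k) + D.mulVec (u k) + cbar + dvec k) i ≤ 0) :
    ∀ (w : ℕ → (Fin dn → ℝ)), (∀ k, w k ∈ W) →
    ∀ (s : ℕ → (Fin dn → ℝ)) (a : ℕ → (Fin pn → ℝ)),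
      s 0 = x 0 →
      (∀ k, a k = u k - K.mulVec (s k - x k)) →
      (∀ k, s (k + 1) = A.mulVec (s k) + B.mulVec (a k) + b + w k) →
      ∀ k < N, ∀ i, (C.mulVec (s k) + D.mulVec (a k) + cbar) i ≤ 0 := by
  intro w hw s a hs0 ha hs k hk i
  -- error dynamics: s k - x k is a tube element
  have key : ∀ m, m ≤ N → ∃ ws : Fin m → (Fin dn → ℝ), (∀ j, ws j ∈ W) ∧
      s m - x m = ∑ j : Fin m, (AK ^ (j : ℕ)).mulVec (ws j) := by
    intro m
    induction m with
    | zero =>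
      intro _
      exact ⟨fun j => j.elim0, fun j => j.elim0, by simp [hs0]⟩
    | succ m ih =>
      intro hm
      obtain ⟨ws, hwsW, hws⟩ := ih (le_of_lt (Nat.lt_of_succ_le hm))
      have hmN : m < N := Nat.lt_of_succ_le hm
      refine ⟨Fin.cons (w m) ws, ?_, ?_⟩
      · intro j
        refine Fin.cases ?_ ?_ j
        · simpa using hw m
        · intro j; simpa using hwsW j
      · have e1 : s (m + 1) - x (m + 1) = AK.mulVec (s m - x m) + w m := by
          rw [hs m, hx m hmN, ha m, hAK]
          simp [Matrix.mulVec_sub, Matrix.sub_mulVec, Matrix.mulVec_mulVec]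
          abel
        have hsum : AK *ᵥ ∑ j : Fin m, AK ^ (j:ℕ) *ᵥ ws j
            = ∑ j : Fin m, AK *ᵥ (AK ^ (j:ℕ) *ᵥ ws j) := by
          simpa only [Matrix.mulVecLin_apply] using
            map_sum AK.mulVecLin (fun j : Fin m => AK ^ (j:ℕ) *ᵥ ws j) Finset.univ
        rw [e1, hws, Fin.sum_univ_succ, hsum]
        simp only [Fin.cons_zero, Fin.cons_succ, Fin.val_succ, Fin.val_zero,
          pow_zero, Matrix.one_mulVec, Matrix.mulVec_mulVec, ← pow_succ']
        rw [add_comm]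
      -- done
  obtain ⟨ws, hwsW, hws⟩ := key k (le_of_lt hk)
  have hmem : CK.mulVec (s k - x k) i ∈
      {y : ℝ | ∃ ws : Fin k → (Fin dn → ℝ), (∀ j, ws j ∈ W) ∧
          y = CK.mulVec (∑ j : Fin k, (AK ^ (j : ℕ)).mulVec (ws j)) i} :=
    ⟨ws, hwsW, by rw [hws]⟩
  have hle : CK.mulVec (s k - x k) i ≤ dvec k i := (hd k i).2 hmem
  have expand : (C.mulVec (s k) + D.mulVec (a k) + cbar) i =
      (C.mulVec (x k) + D.mulVec (u k) + cbar) i + CK.mulVec (s k - x k) i := by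
    rw [ha k, hCK]
    simp only [Matrix.mulVec_sub, Matrix.sub_mulVec, Matrix.mulVec_mulVec,
      Pi.add_apply, Pi.sub_apply]
    ring
  have := htight k hk i
  simp only [Pi.add_apply] at this ⊢
  rw [show C.mulVec (s k) i + D.mulVec (a k) i + cbar i =
      (C.mulVec (s k) + D.mulVec (a k) + cbar) i by simp]
  rw [expand]
  simp only [Pi.add_apply] at expand ⊢
  linarith
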